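/- For every feasible set S : Finset (Fin N) with ∑_{i ∈ S} c i ≤ B, one has ∑_{i ∈ S} v i ≤ (∑_{i < k} v i) + max_i v i. Consequently, writing OPT for the maximum of ∑_{i ∈ S} v i over feasible S, the greedy prefix value ∑_{i < k} v i satisfies ∑_{i < k} v i ≥ OPT − max_i v i, i.e., the Greedy Algorithm for the binary treatment assignment (0/1 knapsack) problem has approximation ratio at least 1 − (max_i v i)/OPT. -/

import Mathlib

/-- greedy approximation guarantee for the binary treatment
assignment (0/1 knapsack) problem: every feasible set has value at most the
greedy prefix value plus the maximum item value; equivalently the greedy prefix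
value is at least `OPT - max_i v i`. -/
theorem greedy_knapsack_approx
    (N : ℕ) (hN : 0 < N) (v c : Fin N → ℝ)
    (hv : ∀ i, 0 < v i) (hc : ∀ i, 0 < c i)
    (B : ℝ) (hB : 0 ≤ B)
    (hsorted : ∀ i j : Fin N, i ≤ j → v j * c i ≤ v i * c j)
    (k : ℕ) (hkN : k ≤ N)
    (hfeas : ∑ i ∈ Finset.univ.filter (fun i : Fin N => (i : ℕ) < k), c i ≤ B)
    (hkmax : ∀ m : ℕ, m ≤ N →
      (∑ i ∈ Finset.univ.filter (fun i : Fin N => (i : ℕ) < m), c i) ≤ B → m ≤ k) :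
    ∀ S : Finset (Fin N), (∑ i ∈ S, c i) ≤ B →
      ∑ i ∈ S, v i ≤
        (∑ i ∈ Finset.univ.filter (fun i : Fin N => (i : ℕ) < k), v i)
          + Finset.univ.sup' (Finset.univ_nonempty_iff.mpr ⟨⟨0, hN⟩⟩) v := by
  intro S hS
  set P := Finset.univ.filter (fun i : Fin N => (i : ℕ) < k) with hPdef
  have hmax : ∀ i : Fin N,
      v i ≤ Finset.univ.sup' (Finset.univ_nonempty_iff.mpr ⟨⟨0, hN⟩⟩) v :=
    fun i => Finset.le_sup' v (Finset.mem_univ i)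
  by_cases hk : k < N
  · set κ : Fin N := ⟨k, hk⟩ with hκ
    have hBlt : B < ∑ i ∈ Finset.univ.filter (fun i : Fin N => (i : ℕ) < k + 1), c i := by
      by_contra h
      push_neg at h
      have := hkmax (k + 1) hk h
      omega
    have hκP : κ ∉ P := by simp [hPdef, hκ]
    have hPk : Finset.univ.filter (fun i : Fin N => (i : ℕ) < k + 1) = insert κ P := by
      ext i
      simp only [Finset.mem_filter, Finset.mem_univ, true_and, Finset.mem_insert,
        hPdef, Fin.ext_iff, hκ]
      omega
    have hBle : B ≤ c κ + ∑ i ∈ P, c i := by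
      rw [hPk, Finset.sum_insert hκP] at hBlt
      linarith
    -- sum decompositions
    have e1 : ∑ i ∈ S ∩ P, c i + ∑ i ∈ S \ P, c i = ∑ i ∈ S, c i :=
      Finset.sum_inter_add_sum_sdiff S P c
    have e2 : ∑ i ∈ P ∩ S, c i + ∑ i ∈ P \ S, c i = ∑ i ∈ P, c i :=
      Finset.sum_inter_add_sum_sdiff P S c
    have e3 : ∑ i ∈ S ∩ P, c i = ∑ i ∈ P ∩ S, c i := by rw [Finset.inter_comm]
    have hcineq : ∑ i ∈ S \ P, c i ≤ ∑ i ∈ P \ S, c i + c κ := by linarith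
    have hr1 : ∀ i ∈ S \ P, v i * c κ ≤ v κ * c i := by
      intro i hi
      apply hsorted κ i
      simp only [Finset.mem_sdiff, hPdef, Finset.mem_filter, Finset.mem_univ,
        true_and] at hi
      refine Fin.le_def.mpr ?_
      show k ≤ (i : ℕ)
      omega
    have hr2 : ∀ i ∈ P \ S, v κ * c i ≤ v i * c κ := by
      intro i hi
      apply hsorted i κ
      simp only [Finset.mem_sdiff, hPdef, Finset.mem_filter, Finset.mem_univ,
        true_and] at hi
      refine Fin.le_def.mpr ?_
      show (i : ℕ) ≤ k
      exact le_of_lt hi.1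
    have hvκ : 0 < v κ := hv κ
    have hcκ : 0 < c κ := hc κ
    have key : (∑ i ∈ S, v i) * c κ ≤ (∑ i ∈ P, v i + v κ) * c κ := by
      calc (∑ i ∈ S, v i) * c κ
          = ∑ i ∈ S ∩ P, v i * c κ + ∑ i ∈ S \ P, v i * c κ := by
            rw [← Finset.sum_mul, ← Finset.sum_mul, ← add_mul,
              Finset.sum_inter_add_sum_sdiff]
        _ ≤ ∑ i ∈ S ∩ P, v i * c κ + ∑ i ∈ S \ P, v κ * c i := by
            exact add_le_add_right (Finset.sum_le_sum hr1) _
        _ = ∑ i ∈ S ∩ P, v i * c κ + v κ * ∑ i ∈ S \ P, c i := by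
            rw [Finset.mul_sum]
        _ ≤ ∑ i ∈ S ∩ P, v i * c κ + v κ * (∑ i ∈ P \ S, c i + c κ) := by
            gcongr
        _ = ∑ i ∈ S ∩ P, v i * c κ + ∑ i ∈ P \ S, v κ * c i + v κ * c κ := by
            rw [mul_add, Finset.mul_sum]; ring
        _ ≤ ∑ i ∈ S ∩ P, v i * c κ + ∑ i ∈ P \ S, v i * c κ + v κ * c κ := by
            exact add_le_add_left (add_le_add_right (Finset.sum_le_sum hr2) _) _
        _ = (∑ i ∈ P, v i + v κ) * c κ := by
            rw [Finset.inter_comm, ← Finset.sum_mul, ← Finset.sum_mul,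
              ← add_mul, Finset.sum_inter_add_sum_sdiff, add_mul]
    have := le_of_mul_le_mul_right key hcκ
    linarith [hmax κ]
  · have hkeq : k = N := le_antisymm hkN (not_lt.mp hk)
    have hPuniv : P = Finset.univ := by
      ext i
      simp [hPdef, hkeq, i.isLt]
    have h1 : ∑ i ∈ S, v i ≤ ∑ i ∈ P, v i := by
      rw [hPuniv]
      exact Finset.sum_le_sum_of_subset_of_nonneg (Finset.subset_univ S)
        (fun i _ _ => le_of_lt (hv i))
    have h2 : (0:ℝ) < Finset.univ.sup' (Finset.univ_nonempty_iff.mpr ⟨⟨0, hN⟩⟩) v :=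
      lt_of_lt_of_le (hv ⟨0, hN⟩) (hmax ⟨0, hN⟩)
    linarith
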